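/- Let L ≥ 3, λ > 0, and let σ > 0 satisfy L·σ^{2L-2} = λ(L-2) (so σ is the double-root value x*). Define g(x) = (x^L - √λ·y)² + λLx² with y such that σ^L - √λ·y + λσ^{2-L} = 0. Then for τ with |τ/σ^L| ≤ 1/2, g((σ^L + τ)^{1/L}) - g(σ) ≥ -(16(L-2)(L-1)λ)/(3L²·σ^{3L-2})·|τ|³; in particular the second-order term in τ vanishes. -/

import Mathlib

private lemma mono_helper {f f' : ℝ → ℝ} {a b : ℝ} (hab : a ≤ b)
    (hf : ∀ x ∈ Set.Icc a b, HasDerivAt f (f' x) x)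
    (h' : ∀ x ∈ Set.Icc a b, 0 ≤ f' x) : f a ≤ f b := by
  have hm : MonotoneOn f (Set.Icc a b) := by
    apply monotoneOn_of_deriv_nonneg (convex_Icc a b)
    · exact fun x hx => (hf x hx).continuousAt.continuousWithinAt
    · exact fun x hx => ((hf x (interior_subset hx)).differentiableAt).differentiableWithinAt
    · intro x hx
      rw [(hf x (interior_subset hx)).deriv]
      exact h' x (interior_subset hx)
  exact hm (Set.left_mem_Icc.2 hab) (Set.right_mem_Icc.2 hab) hab

private lemma hasDerivAt_one_add (p x : ℝ) (hx : 0 < 1 + x) :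
    HasDerivAt (fun t : ℝ => (1 + t) ^ p) (p * (1 + x) ^ (p - 1)) x := by
  have h1 : HasDerivAt (fun t : ℝ => 1 + t) 1 x := by
    simpa using (hasDerivAt_id x).const_add (1 : ℝ)
  have h2 := Real.hasDerivAt_rpow_const (x := 1 + x) (p := p) (Or.inl (ne_of_gt hx))
  have h3 := h2.comp x h1
  rw [mul_one] at h3
  exact h3

private lemma key_pos {α : ℝ} (hα0 : 0 < α) (hα1 : α < 1) {u : ℝ} (hu0 : 0 ≤ u) :
    1 + α * u + α * (α - 1) / 2 * u ^ 2 ≤ (1 + u) ^ α := by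
  set f : ℝ → ℝ := fun t => (1 + t) ^ α - (1 + α * t + α * (α - 1) / 2 * t ^ 2) with hf
  set f1 : ℝ → ℝ := fun t => α * (1 + t) ^ (α - 1) - (α + α * (α - 1) * t) with hf1
  set f2 : ℝ → ℝ := fun t => α * (α - 1) * (1 + t) ^ (α - 2) - α * (α - 1) with hf2
  have hposd : ∀ x : ℝ, 0 ≤ x → 0 < 1 + x := fun x hx => by linarith
  have hdf : ∀ x : ℝ, 0 ≤ x → HasDerivAt f (f1 x) x := by
    intro x hx
    have h1 := hasDerivAt_one_add α x (hposd x hx)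
    have h2 : HasDerivAt (fun t : ℝ => 1 + α * t + α * (α - 1) / 2 * t ^ 2)
        (α + α * (α - 1) * x) x := by
      have := (((hasDerivAt_id x).const_mul α).const_add 1).add
        ((hasDerivAt_pow 2 x).const_mul (α * (α - 1) / 2))
      refine this.congr_deriv ?_
      push_cast; ring
    exact h1.sub h2
  have hdf1 : ∀ x : ℝ, 0 ≤ x → HasDerivAt f1 (f2 x) x := by
    intro x hx
    have h1 := (hasDerivAt_one_add (α - 1) x (hposd x hx)).const_mul α
    have h2 : HasDerivAt (fun t : ℝ => α + α * (α - 1) * t) (α * (α - 1)) x := by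
      simpa using ((hasDerivAt_id x).const_mul (α * (α - 1))).const_add α
    have := h1.sub h2
    refine this.congr_deriv ?_
    simp [hf2]; ring_nf
  have hf2nn : ∀ x : ℝ, 0 ≤ x → 0 ≤ f2 x := by
    intro x hx
    have h1 : (1 + x) ^ (α - 2) ≤ 1 :=
      Real.rpow_le_one_of_one_le_of_nonpos (by linarith) (by linarith)
    have h2 : α * (α - 1) < 0 := mul_neg_of_pos_of_neg hα0 (by linarith)
    simp only [hf2]
    nlinarith
  have hf1nn : ∀ x : ℝ, 0 ≤ x → 0 ≤ f1 x := by
    intro x hx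
    have h0 : f1 0 = 0 := by simp [hf1, Real.one_rpow]
    have := mono_helper (f := f1) (f' := f2) hx
      (fun t ht => hdf1 t ht.1) (fun t ht => hf2nn t ht.1)
    linarith [h0 ▸ this]
  have h0 : f 0 = 0 := by simp [hf, Real.one_rpow]
  have := mono_helper (f := f) (f' := f1) hu0
    (fun t ht => hdf t ht.1) (fun t ht => hf1nn t ht.1)
  rw [h0] at this
  simpa [hf] using this

private lemma key_neg {α : ℝ} (hα0 : 0 < α) (hα1 : α < 1) {u : ℝ}
    (hu1 : -(1/2) ≤ u) (hu0 : u ≤ 0) :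
    1 + α * u + α * (α - 1) / 2 * u ^ 2 + 4 * α * (α - 1) * (α - 2) / 3 * u ^ 3
      ≤ (1 + u) ^ α := by
  set c3 : ℝ := 4 * α * (α - 1) * (α - 2) / 3 with hc3
  set g : ℝ → ℝ := fun t => (1 + t) ^ α
      - (1 + α * t + α * (α - 1) / 2 * t ^ 2 + c3 * t ^ 3) with hg
  set g1 : ℝ → ℝ := fun t => α * (1 + t) ^ (α - 1)
      - (α + α * (α - 1) * t + 3 * c3 * t ^ 2) with hg1
  set g2 : ℝ → ℝ := fun t => α * (α - 1) * (1 + t) ^ (α - 2)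
      - (α * (α - 1) + 6 * c3 * t) with hg2
  set g3 : ℝ → ℝ := fun t => α * (α - 1) * (α - 2) * (1 + t) ^ (α - 3) - 6 * c3 with hg3
  have hdom : ∀ x : ℝ, x ∈ Set.Icc (-(1/2 : ℝ)) 0 → 0 < 1 + x := by
    intro x hx; have := hx.1; simp only [Set.mem_Icc] at *; linarith
  have hdg : ∀ x ∈ Set.Icc (-(1/2 : ℝ)) 0, HasDerivAt g (g1 x) x := by
    intro x hx
    have h1 := hasDerivAt_one_add α x (hdom x hx)
    have h2 : HasDerivAt (fun t : ℝ => 1 + α * t + α * (α - 1) / 2 * t ^ 2 + c3 * t ^ 3)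
        (α + α * (α - 1) * x + 3 * c3 * x ^ 2) x := by
      have := ((((hasDerivAt_id x).const_mul α).const_add 1).add
        ((hasDerivAt_pow 2 x).const_mul (α * (α - 1) / 2))).add
        ((hasDerivAt_pow 3 x).const_mul c3)
      refine this.congr_deriv ?_
      push_cast; ring
    exact h1.sub h2
  have hdg1 : ∀ x ∈ Set.Icc (-(1/2 : ℝ)) 0, HasDerivAt g1 (g2 x) x := by
    intro x hx
    have h1 := (hasDerivAt_one_add (α - 1) x (hdom x hx)).const_mul α
    have h2 : HasDerivAt (fun t : ℝ => α + α * (α - 1) * t + 3 * c3 * t ^ 2)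
        (α * (α - 1) + 6 * c3 * x) x := by
      have := (((hasDerivAt_id x).const_mul (α * (α - 1))).const_add α).add
        ((hasDerivAt_pow 2 x).const_mul (3 * c3))
      refine this.congr_deriv ?_
      push_cast; ring
    have := h1.sub h2
    refine this.congr_deriv ?_
    simp [hg2]; ring_nf
  have hdg2 : ∀ x ∈ Set.Icc (-(1/2 : ℝ)) 0, HasDerivAt g2 (g3 x) x := by
    intro x hx
    have h1 := (hasDerivAt_one_add (α - 2) x (hdom x hx)).const_mul (α * (α - 1))
    have h2 : HasDerivAt (fun t : ℝ => α * (α - 1) + 6 * c3 * t) (6 * c3) x := by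
      simpa using ((hasDerivAt_id x).const_mul (6 * c3)).const_add (α * (α - 1))
    have := h1.sub h2
    refine this.congr_deriv ?_
    simp [hg3]; ring_nf
  -- g3 ≤ 0 on the interval
  have hg3np : ∀ x ∈ Set.Icc (-(1/2 : ℝ)) 0, g3 x ≤ 0 := by
    intro x hx
    have hP : 0 < α * (α - 1) * (α - 2) := by
      have := mul_pos_of_neg_of_neg (show α - 1 < 0 by linarith) (show α - 2 < 0 by linarith)
      nlinarith
    have h8 : (1 + x) ^ (α - 3) ≤ 8 := by
      have hb : (1 + x) ^ (α - 3) ≤ ((1:ℝ)/2) ^ (α - 3) :=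
        Real.rpow_le_rpow_of_nonpos (by norm_num) (by have := hx.1; linarith) (by linarith)
      have he : ((1:ℝ)/2) ^ (α - 3) = (2:ℝ) ^ (3 - α) := by
        rw [one_div, ← Real.rpow_neg_one, ← Real.rpow_mul (by norm_num)]
        ring_nf
      have h2 : (2:ℝ) ^ (3 - α) ≤ (2:ℝ) ^ (3:ℝ) :=
        Real.rpow_le_rpow_of_exponent_le one_le_two (by linarith)
      have h3 : (2:ℝ) ^ (3:ℝ) = 8 := by
        rw [show (3:ℝ) = ((3:ℕ):ℝ) by norm_num, Real.rpow_natCast]; norm_num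
      calc (1 + x) ^ (α - 3) ≤ ((1:ℝ)/2) ^ (α - 3) := hb
        _ = (2:ℝ) ^ (3 - α) := he
        _ ≤ 8 := by rw [← h3]; exact h2
    have hnn : 0 ≤ (1 + x) ^ (α - 3) := Real.rpow_nonneg (hdom x hx).le _
    simp only [hg3, hc3]
    nlinarith
  -- g2 ≥ 0 on the interval
  have hg2nn : ∀ x ∈ Set.Icc (-(1/2 : ℝ)) 0, 0 ≤ g2 x := by
    intro x hx
    have h0 : g2 0 = 0 := by simp [hg2, Real.one_rpow]
    have := mono_helper (f := fun t => -g2 t) (f' := fun t => -g3 t) hx.2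
      (fun t ht => ((hdg2 t ⟨le_trans hx.1 ht.1, ht.2⟩)).neg)
      (fun t ht => by simpa using hg3np t ⟨le_trans hx.1 ht.1, ht.2⟩)
    simp only [h0] at this
    linarith [this]
  -- g1 ≤ 0 on the interval
  have hg1np : ∀ x ∈ Set.Icc (-(1/2 : ℝ)) 0, g1 x ≤ 0 := by
    intro x hx
    have h0 : g1 0 = 0 := by simp [hg1, Real.one_rpow]
    have := mono_helper (f := g1) (f' := g2) hx.2
      (fun t ht => hdg1 t ⟨le_trans hx.1 ht.1, ht.2⟩)
      (fun t ht => hg2nn t ⟨le_trans hx.1 ht.1, ht.2⟩)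
    rw [h0] at this
    exact this
  -- conclude
  have hu : u ∈ Set.Icc (-(1/2 : ℝ)) 0 := ⟨hu1, hu0⟩
  have h0 : g 0 = 0 := by simp [hg, Real.one_rpow]
  have := mono_helper (f := fun t => -g t) (f' := fun t => -g1 t) hu0
    (fun t ht => (hdg t ⟨le_trans hu1 ht.1, ht.2⟩).neg)
    (fun t ht => by simpa using hg1np t ⟨le_trans hu1 ht.1, ht.2⟩)
  simp only [h0, neg_zero] at this
  have hgu : 0 ≤ g u := by linarith
  simp only [hg] at hgu
  linarith

private lemma key_ineq {α : ℝ} (hα0 : 0 < α) (hα1 : α < 1) {u : ℝ} (hu : |u| ≤ 1/2) :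
    1 + α * u + α * (α - 1) / 2 * u ^ 2 - 4 * α * (α - 1) * (α - 2) / 3 * |u| ^ 3
      ≤ (1 + u) ^ α := by
  have hP : 0 < α * (α - 1) * (α - 2) := by
    have := mul_pos_of_neg_of_neg (show α - 1 < 0 by linarith) (show α - 2 < 0 by linarith)
    nlinarith
  rcases le_or_gt 0 u with h | h
  · have hmain := key_pos hα0 hα1 h
    have habs : |u| = u := abs_of_nonneg h
    rw [habs]
    nlinarith [pow_nonneg h 3]
  · have hmain := key_neg hα0 hα1 (by linarith [(abs_le.1 hu).1]) h.le
    have habs : |u| = -u := abs_of_neg h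
    rw [habs]
    have : (-u)^3 = -u^3 := by ring
    rw [this]
    linarith

/-- Third-order lower bound for `g` around a double-root value `σ`: if `Lσ^(2L-2) = λ(L-2)`
and `σ^L - √λ y + λσ^(2-L) = 0`, then for `|τ/σ^L| ≤ 1/2`,
`g((σ^L + τ)^(1/L)) - g(σ) ≥ -(16(L-2)(L-1)λ)/(3L²σ^(3L-2)) |τ|³`. -/
theorem stmt_19 (L : ℕ) (hL : 3 ≤ L) (lam σ y τ : ℝ) (hlam : 0 < lam) (hσ : 0 < σ)
    (hdouble : (L : ℝ) * σ ^ (2 * L - 2) = lam * ((L : ℝ) - 2))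
    (hy : σ ^ L - Real.sqrt lam * y + lam * σ ^ ((2 : ℤ) - (L : ℤ)) = 0)
    (hτ : |τ / σ ^ L| ≤ 1 / 2) :
    (fun x : ℝ => (x ^ L - Real.sqrt lam * y) ^ 2 + lam * L * x ^ 2)
        ((σ ^ L + τ) ^ ((1 : ℝ) / L))
      - (fun x : ℝ => (x ^ L - Real.sqrt lam * y) ^ 2 + lam * L * x ^ 2) σ
      ≥ -(16 * ((L : ℝ) - 2) * ((L : ℝ) - 1) * lam) / (3 * (L : ℝ) ^ 2 * σ ^ (3 * L - 2))
          * |τ| ^ 3 := by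
  have hL3 : (3:ℝ) ≤ (L:ℝ) := by exact_mod_cast hL
  have hLpos : (0:ℝ) < (L:ℝ) := by linarith
  have hs0 : (0:ℝ) < σ ^ L := pow_pos hσ L
  set s : ℝ := σ ^ L with hs
  set u : ℝ := τ / s with hu
  have huabs : |u| ≤ 1/2 := hτ
  have hτs : |τ| ≤ s / 2 := by
    rw [hu, abs_div, abs_of_pos hs0] at huabs
    rw [div_le_iff₀ hs0] at huabs; linarith
  have hstpos : 0 < s + τ := by
    have := (abs_le.1 hτs).1; linarith
  have h1u : 0 < 1 + u := by
    have := (abs_le.1 huabs).1; linarith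
  have hLne : (L:ℝ) ≠ 0 := ne_of_gt hLpos
  have hsne : s ≠ 0 := ne_of_gt hs0
  have hL2 : ((L:ℝ) - 2) ≠ 0 := by linarith
  -- rpow facts
  have hxL : ((s + τ) ^ ((1:ℝ)/L)) ^ L = s + τ := by
    rw [← Real.rpow_natCast ((s + τ) ^ ((1:ℝ)/L)) L, ← Real.rpow_mul hstpos.le,
      one_div, inv_mul_cancel₀ hLne, Real.rpow_one]
  have hx2 : ((s + τ) ^ ((1:ℝ)/L)) ^ 2 = σ^2 * (1 + u) ^ ((2:ℝ)/L) := by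
    have e1 : s + τ = s * (1 + u) := by rw [hu]; field_simp
    calc ((s + τ) ^ ((1:ℝ)/L)) ^ 2 = (s + τ) ^ ((2:ℝ)/L) := by
          rw [← Real.rpow_natCast _ 2, ← Real.rpow_mul hstpos.le]
          congr 1; push_cast; ring
      _ = (s * (1 + u)) ^ ((2:ℝ)/L) := by rw [← e1]
      _ = s ^ ((2:ℝ)/L) * (1 + u) ^ ((2:ℝ)/L) := Real.mul_rpow hs0.le (by linarith)
      _ = σ^2 * (1 + u) ^ ((2:ℝ)/L) := by
          congr 1
          rw [hs, ← Real.rpow_natCast σ L, ← Real.rpow_mul hσ.le,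
            show (L:ℝ) * ((2:ℝ)/L) = 2 by field_simp,
            show (2:ℝ) = ((2:ℕ):ℝ) by norm_num, Real.rpow_natCast]
  have hz : σ ^ ((2 : ℤ) - (L : ℤ)) = σ^2 / s := by
    rw [zpow_sub₀ hσ.ne']
    norm_cast
  have hsy : Real.sqrt lam * y = s + lam * (σ^2 / s) := by
    rw [hz] at hy; linarith
  have hp1 : σ ^ (2*L-2) * σ^2 = s^2 := by
    rw [hs, ← pow_mul, ← pow_add]
    congr 1; omega
  have hp2 : σ ^ (3*L-2) * σ^2 = s^3 := by
    rw [hs, ← pow_mul, ← pow_add]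
    congr 1; omega
  have hB3 : (0:ℝ) < σ ^ (3*L-2) := pow_pos hσ _
  have hB3ne : σ ^ (3*L-2) ≠ 0 := ne_of_gt hB3
  have e1 : lam * ((L:ℝ) - 2) * σ^2 = (L:ℝ) * s^2 := by
    rw [← hdouble, mul_assoc, hp1]
  -- key inequality specialized
  have hα0 : (0:ℝ) < 2/(L:ℝ) := by positivity
  have hα1 : 2/(L:ℝ) < 1 := by rw [div_lt_one hLpos]; linarith
  have hkey := key_ineq hα0 hα1 huabs
  have hineq := mul_le_mul_of_nonneg_left hkey
    (show (0:ℝ) ≤ lam * (L:ℝ) * σ^2 by positivity)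
  have habs3 : |u|^3 = |τ|^3 / s^3 := by
    rw [hu, abs_div, abs_of_pos hs0, div_pow]
  rw [habs3] at hineq
  clear_value s u
  -- the three algebraic identities
  have eq_lin : lam * (L:ℝ) * σ^2 * ((2/(L:ℝ)) * u) = 2 * (lam * (σ^2/s)) * τ := by
    rw [hu]; field_simp
  have eq_quad : lam * (L:ℝ) * σ^2 * ((2/(L:ℝ)) * ((2/(L:ℝ)) - 1) / 2 * u^2) = -τ^2 := by
    have step : lam * (L:ℝ) * σ^2 * ((2/(L:ℝ)) * ((2/(L:ℝ)) - 1) / 2 * u^2)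
        = -τ^2 * (lam * ((L:ℝ) - 2) * σ^2) / ((L:ℝ) * s^2) := by
      rw [hu]; field_simp; ring
    rw [step, e1]
    field_simp
  have eq_cub : lam * (L:ℝ) * σ^2
      * (4 * (2/(L:ℝ)) * ((2/(L:ℝ)) - 1) * ((2/(L:ℝ)) - 2) / 3 * (|τ|^3 / s^3))
      = (16 * ((L : ℝ) - 2) * ((L : ℝ) - 1) * lam) / (3 * (L : ℝ) ^ 2 * σ ^ (3 * L - 2))
          * |τ| ^ 3 := by
    have h1 : σ^2 / s^3 = 1 / (σ ^ (3*L-2)) := by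
      rw [div_eq_div_iff (by positivity) hB3ne]
      linear_combination hp2
    have step : lam * (L:ℝ) * σ^2
        * (4 * (2/(L:ℝ)) * ((2/(L:ℝ)) - 1) * ((2/(L:ℝ)) - 2) / 3 * (|τ|^3 / s^3))
        = (16 * ((L:ℝ) - 2) * ((L:ℝ) - 1) * lam) * |τ|^3 * (σ^2 / s^3) / (3 * (L:ℝ)^2) := by
      field_simp; ring
    rw [step, h1]
    ring
  -- main computation
  simp only
  rw [← hs, hxL, hx2, hsy]
  calc (s + τ - (s + lam * (σ^2 / s)))^2 + lam * (L:ℝ) * (σ^2 * (1 + u) ^ ((2:ℝ)/L))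
        - ((s - (s + lam * (σ^2 / s)))^2 + lam * (L:ℝ) * σ^2)
      ≥ (s + τ - (s + lam * (σ^2 / s)))^2
        + lam * (L:ℝ) * σ^2 * (1 + (2/(L:ℝ)) * u + (2/(L:ℝ)) * ((2/(L:ℝ)) - 1) / 2 * u^2
            - 4 * (2/(L:ℝ)) * ((2/(L:ℝ)) - 1) * ((2/(L:ℝ)) - 2) / 3 * (|τ|^3 / s^3))
        - ((s - (s + lam * (σ^2 / s)))^2 + lam * (L:ℝ) * σ^2) := by
        have : lam * (L:ℝ) * σ^2 * (1 + u) ^ ((2:ℝ)/L)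
            = lam * (L:ℝ) * (σ^2 * (1 + u) ^ ((2:ℝ)/L)) := by ring
        linarith [hineq, this.ge]
    _ = -(16 * ((L : ℝ) - 2) * ((L : ℝ) - 1) * lam) / (3 * (L : ℝ) ^ 2 * σ ^ (3 * L - 2))
          * |τ| ^ 3 := by
        linear_combination eq_lin + eq_quad - eq_cub
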